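/- arXiv:1807.00915 — 4 statements merged into one kernel-verified Lean document; each statement's English description precedes it below -/
import Mathlib

section
/- Let n ≥ 1 and let x_0, x_1, …, x_n be real numbers whose increments Δx_k := x_k − x_{k−1} are all nonzero (1 ≤ k ≤ n). Then the Extrema Quadratic Variation of the sequence equals its quadratic variation plus twice the sum of cross products of increments separated only by increments of a common sign; precisely, D₂^Ext(x) = Σ_{k=1}^n (Δx_k)² + 2 Σ_{1 ≤ i < j ≤ n} Δx_i · Δx_j · Π_{k=i}^{j−1} 1{Δx_k · Δx_{k+1} > 0}, where 1{·} denotes the indicator of the stated condition. -/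
open Finset

/-- The set of extremal indices of the sequence `x 0, x 1, …, x n`: the endpoints `0` and `n`
together with every interior index `i` (with `1 ≤ i ≤ n - 1`) at which the consecutive
increments change sign. -/
noncomputable def extremalIndices (n : ℕ) (x : ℕ → ℝ) : Finset ℕ :=
  (Finset.range (n + 1)).filter
    (fun i => i = 0 ∨ i = n ∨
      (1 ≤ i ∧ i ≤ n - 1 ∧ (x i - x (i - 1)) * (x (i + 1) - x i) < 0))

/-- The Extrema Quadratic Variation of the sequence `x 0, …, x n`: listing the extremal
indices in increasing order as `τ_0 < τ_1 < … < τ_m`, it is `∑_{i=1}^m (x τ_i - x τ_{i-1})²`. -/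
noncomputable def extQV (n : ℕ) (x : ℕ → ℝ) : ℝ :=
  let L := (extremalIndices n x).sort (· ≤ ·)
  ((L.zip L.tail).map (fun p => (x p.2 - x p.1) ^ 2)).sum

/-! ### Auxiliary definitions and lemmas -/

noncomputable def pSum (x : ℕ → ℝ) (L : List ℕ) : ℝ :=
  ((L.zip L.tail).map (fun p => (x p.2 - x p.1) ^ 2)).sum

lemma pSum_cons_cons (x : ℕ → ℝ) (c m : ℕ) (M : List ℕ) :
    pSum x (c :: m :: M) = (x m - x c) ^ 2 + pSum x (m :: M) := by
  simp [pSum]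

lemma pSum_concat2 (x : ℕ → ℝ) (L : List ℕ) (a b : ℕ) :
    pSum x (L ++ [a, b]) = pSum x (L ++ [a]) + (x b - x a) ^ 2 := by
  induction L with
  | nil => simp [pSum]
  | cons c L ih =>
    cases L with
    | nil => simp [pSum]
    | cons d L' =>
      simp only [List.cons_append] at ih ⊢
      rw [pSum_cons_cons, pSum_cons_cons, ih]
      ring

lemma pSum_concat (x : ℕ → ℝ) (L : List ℕ) (a b : ℕ) :
    pSum x (L ++ [a] ++ [b]) = pSum x (L ++ [a]) + (x b - x a) ^ 2 := by
  rw [List.append_assoc]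
  exact pSum_concat2 x L a b

lemma sort_insert_max (s : Finset ℕ) {b : ℕ} (hb : ∀ a ∈ s, a < b) :
    (insert b s).sort (· ≤ ·) = s.sort (· ≤ ·) ++ [b] := by
  have hb' : b ∉ s := fun h => lt_irrefl b (hb b h)
  refine (fun hp hs => List.Perm.eq_of_pairwise' (Finset.pairwise_sort _ _) hs hp) ?_ ?_
  · have h1 : ((insert b s).sort (· ≤ ·) : Multiset ℕ) = (insert b s).1 :=
      Finset.sort_eq _ _
    have h2 : ((s.sort (· ≤ ·) : List ℕ) : Multiset ℕ) = s.1 := Finset.sort_eq _ _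
    rw [← Multiset.coe_eq_coe, h1, Finset.insert_val_of_notMem hb', ← h2,
      Multiset.cons_coe, Multiset.coe_eq_coe]
    exact (List.perm_append_singleton b _).symm
  · rw [List.pairwise_append]
    refine ⟨Finset.pairwise_sort _ _, List.pairwise_singleton _ b, ?_⟩
    intro a ha c hc
    rw [List.mem_singleton] at hc
    subst hc
    exact le_of_lt (hb a ((Finset.mem_sort _).1 ha))

lemma tele (x : ℕ → ℝ) (a : ℕ) : ∀ b, a ≤ b →
    ∑ i ∈ Finset.Icc (a + 1) b, (x i - x (i - 1)) = x b - x a := by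
  intro b hb
  induction b, hb using Nat.le_induction with
  | base => simp
  | succ m hm ih =>
    rw [Finset.sum_Icc_succ_top (by omega : a + 1 ≤ m + 1), ih]
    simp

lemma mem_extremal (n : ℕ) (x : ℕ → ℝ) (i : ℕ) :
    i ∈ extremalIndices n x ↔
      (i = 0 ∨ i = n ∨
        (1 ≤ i ∧ i ≤ n - 1 ∧ (x i - x (i - 1)) * (x (i + 1) - x i) < 0)) := by
  simp only [extremalIndices, Finset.mem_filter, Finset.mem_range, Nat.lt_succ_iff]
  constructor
  · rintro ⟨-, h⟩; exact h
  · intro h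
    refine ⟨?_, h⟩
    rcases h with rfl | rfl | ⟨h1, h2, -⟩ <;> omega

lemma mem_extremal_le {n : ℕ} {x : ℕ → ℝ} {i : ℕ} (h : i ∈ extremalIndices n x) :
    i ≤ n := by
  have := (Finset.mem_filter.1 h).1
  rw [Finset.mem_range] at this
  omega

lemma zero_mem_extremal (n : ℕ) (x : ℕ → ℝ) : 0 ∈ extremalIndices n x :=
  (mem_extremal n x 0).2 (Or.inl rfl)

lemma top_mem_extremal (n : ℕ) (x : ℕ → ℝ) : n ∈ extremalIndices n x :=
  (mem_extremal n x n).2 (Or.inr (Or.inl rfl))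

lemma extremal_succ_of_pos (n : ℕ) (hn : 1 ≤ n) (x : ℕ → ℝ)
    (h : ¬ (x n - x (n - 1)) * (x (n + 1) - x n) < 0) :
    extremalIndices (n + 1) x = insert (n + 1) ((extremalIndices n x).erase n) := by
  ext i
  rw [mem_extremal, Finset.mem_insert, Finset.mem_erase, mem_extremal]
  simp only [Nat.add_sub_cancel]
  constructor
  · rintro (rfl | rfl | ⟨h1, h2, h3⟩)
    · exact Or.inr ⟨by omega, Or.inl rfl⟩
    · exact Or.inl rfl
    · have hne : i ≠ n := by rintro rfl; exact h h3
      exact Or.inr ⟨hne, Or.inr (Or.inr ⟨h1, by omega, h3⟩)⟩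
  · rintro (rfl | ⟨hne, (rfl | rfl | ⟨h1, h2, h3⟩)⟩)
    · exact Or.inr (Or.inl rfl)
    · exact Or.inl rfl
    · exact absurd rfl hne
    · exact Or.inr (Or.inr ⟨h1, by omega, h3⟩)

lemma extremal_succ_of_neg (n : ℕ) (hn : 1 ≤ n) (x : ℕ → ℝ)
    (h : (x n - x (n - 1)) * (x (n + 1) - x n) < 0) :
    extremalIndices (n + 1) x = insert (n + 1) (extremalIndices n x) := by
  ext i
  rw [mem_extremal, Finset.mem_insert, mem_extremal]
  simp only [Nat.add_sub_cancel]
  constructor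
  · rintro (rfl | rfl | ⟨h1, h2, h3⟩)
    · exact Or.inr (Or.inl rfl)
    · exact Or.inl rfl
    · by_cases hne : i = n
      · exact Or.inr (Or.inr (Or.inl hne))
      · exact Or.inr (Or.inr (Or.inr ⟨h1, by omega, h3⟩))
  · rintro (rfl | rfl | hin | ⟨h1, h2, h3⟩)
    · exact Or.inr (Or.inl rfl)
    · exact Or.inl rfl
    · exact Or.inr (Or.inr ⟨by omega, by omega, by rw [hin]; exact h⟩)
    · exact Or.inr (Or.inr ⟨h1, by omega, h3⟩)

noncomputable def qvRHS (n : ℕ) (x : ℕ → ℝ) : ℝ :=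
  (∑ k ∈ Finset.Icc 1 n, (x k - x (k - 1)) ^ 2) +
    2 * ∑ j ∈ Finset.Icc 1 n, ∑ i ∈ Finset.Ico 1 j,
      (x i - x (i - 1)) * (x j - x (j - 1)) *
        ∏ k ∈ Finset.Ico i j,
          (if 0 < (x k - x (k - 1)) * (x (k + 1) - x k) then (1 : ℝ) else 0)

lemma qvRHS_succ (n : ℕ) (x : ℕ → ℝ) :
    qvRHS (n + 1) x = qvRHS n x + (x (n + 1) - x n) ^ 2 +
      2 * ∑ i ∈ Finset.Ico 1 (n + 1),
        (x i - x (i - 1)) * (x (n + 1) - x n) *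
          ∏ k ∈ Finset.Ico i (n + 1),
            (if 0 < (x k - x (k - 1)) * (x (k + 1) - x k) then (1 : ℝ) else 0) := by
  unfold qvRHS
  rw [Finset.sum_Icc_succ_top (by omega : 1 ≤ n + 1),
    Finset.sum_Icc_succ_top (by omega : 1 ≤ n + 1)]
  simp only [Nat.add_sub_cancel]
  ring

lemma extQV_eq_pSum (n : ℕ) (x : ℕ → ℝ) :
    extQV n x = pSum x ((extremalIndices n x).sort (· ≤ ·)) := rfl

lemma extQV_eq_qvRHS (x : ℕ → ℝ) : ∀ n, 1 ≤ n →
    (∀ k, 1 ≤ k → k ≤ n → x k - x (k - 1) ≠ 0) → extQV n x = qvRHS n x := by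
  intro n hn
  induction n, hn using Nat.le_induction with
  | base =>
    intro hx
    have hE : extremalIndices 1 x = insert 1 ({0} : Finset ℕ) := by
      ext i
      rw [mem_extremal, Finset.mem_insert, Finset.mem_singleton]
      constructor
      · rintro (rfl | rfl | ⟨h1, h2, -⟩)
        · exact Or.inr rfl
        · exact Or.inl rfl
        · omega
      · rintro (rfl | rfl)
        · exact Or.inr (Or.inl rfl)
        · exact Or.inl rfl
    have hsort : (extremalIndices 1 x).sort (· ≤ ·) = [0, 1] := by
      rw [hE, sort_insert_max _ (by simp), Finset.sort_singleton]
      rfl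
    rw [extQV_eq_pSum, hsort]
    simp [pSum, qvRHS]
  | succ n hn ih =>
    intro hx
    have hxn : ∀ k, 1 ≤ k → k ≤ n → x k - x (k - 1) ≠ 0 :=
      fun k h1 h2 => hx k h1 (by omega)
    have IH := ih hxn
    have hDn1 : x (n + 1) - x n ≠ 0 := by
      have := hx (n + 1) (by omega) (le_refl _)
      simpa using this
    have hprod_ne : (x n - x (n - 1)) * (x (n + 1) - x n) ≠ 0 :=
      mul_ne_zero (hx n hn (by omega)) hDn1
    -- the truncated extremal set and its maximum
    set s : Finset ℕ := (extremalIndices n x).erase n with hs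
    have hs0 : 0 ∈ s := Finset.mem_erase.2 ⟨by omega, zero_mem_extremal n x⟩
    have hsne : s.Nonempty := ⟨0, hs0⟩
    set τ : ℕ := s.max' hsne with hτ
    have hτs : τ ∈ s := Finset.max'_mem s hsne
    have hτE : τ ∈ extremalIndices n x := (Finset.mem_erase.1 hτs).2
    have hτne : τ ≠ n := (Finset.mem_erase.1 hτs).1
    have hτlt : τ < n := lt_of_le_of_ne (mem_extremal_le hτE) hτne
    have hsub : ∀ a ∈ s, a < n :=
      fun a ha => lt_of_le_of_ne (mem_extremal_le (Finset.mem_erase.1 ha).2)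
        (Finset.mem_erase.1 ha).1
    have hEn : extremalIndices n x = insert n s :=
      (Finset.insert_erase (top_mem_extremal n x)).symm
    have hsortn : (extremalIndices n x).sort (· ≤ ·) = s.sort (· ≤ ·) ++ [n] := by
      rw [hEn, sort_insert_max s hsub]
    have hsorts : s.sort (· ≤ ·) = (s.erase τ).sort (· ≤ ·) ++ [τ] := by
      conv_lhs => rw [← Finset.insert_erase hτs]
      exact sort_insert_max _ (fun a ha =>
        lt_of_le_of_ne (Finset.le_max' s a (Finset.mem_erase.1 ha).2)
          (Finset.mem_erase.1 ha).1)
    by_cases hsgn : (x n - x (n - 1)) * (x (n + 1) - x n) < 0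
    -- Case B : sign change at n
    · have hEB := extremal_succ_of_neg n hn x hsgn
      have hsort1 : (extremalIndices (n + 1) x).sort (· ≤ ·) =
          (extremalIndices n x).sort (· ≤ ·) ++ [n + 1] := by
        rw [hEB]
        exact sort_insert_max _ (fun a ha => by
          have := mem_extremal_le ha; omega)
      have hLHS : extQV (n + 1) x = extQV n x + (x (n + 1) - x n) ^ 2 := by
        rw [extQV_eq_pSum, extQV_eq_pSum, hsort1, hsortn, pSum_concat]
      have hcross : ∑ i ∈ Finset.Ico 1 (n + 1),
          (x i - x (i - 1)) * (x (n + 1) - x n) *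
            ∏ k ∈ Finset.Ico i (n + 1),
              (if 0 < (x k - x (k - 1)) * (x (k + 1) - x k) then (1 : ℝ) else 0)
          = 0 := by
        apply Finset.sum_eq_zero
        intro i hi
        rw [Finset.mem_Ico] at hi
        have hmem : n ∈ Finset.Ico i (n + 1) := Finset.mem_Ico.2 ⟨by omega, by omega⟩
        rw [Finset.prod_eq_zero hmem (by rw [if_neg (by linarith)]), mul_zero]
      rw [hLHS, IH, qvRHS_succ, hcross]
      ring
    -- Case A : no sign change at n
    · have hpos : 0 < (x n - x (n - 1)) * (x (n + 1) - x n) :=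
        lt_of_le_of_ne (not_lt.1 hsgn) (Ne.symm hprod_ne)
      have hEA := extremal_succ_of_pos n hn x hsgn
      have hsort1 : (extremalIndices (n + 1) x).sort (· ≤ ·) =
          s.sort (· ≤ ·) ++ [n + 1] := by
        rw [hEA]
        exact sort_insert_max _ (fun a ha => by have := hsub a ha; omega)
      have hLHS : extQV (n + 1) x =
          extQV n x - (x n - x τ) ^ 2 + (x (n + 1) - x τ) ^ 2 := by
        rw [extQV_eq_pSum, extQV_eq_pSum, hsort1, hsortn, hsorts,
          pSum_concat, pSum_concat]
        ring
      -- product characterization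
      have hprodchar : ∀ i, 1 ≤ i → i ≤ n →
          (∏ k ∈ Finset.Ico i n,
            (if 0 < (x k - x (k - 1)) * (x (k + 1) - x k) then (1 : ℝ) else 0))
          = if τ < i then 1 else 0 := by
        intro i h1 h2
        by_cases hi : τ < i
        · rw [if_pos hi]
          apply Finset.prod_eq_one
          intro k hk
          rw [Finset.mem_Ico] at hk
          have hkne : (x k - x (k - 1)) * (x (k + 1) - x k) ≠ 0 := by
            refine mul_ne_zero (hx k (by omega) (by omega)) ?_
            have := hx (k + 1) (by omega) (by omega)
            simpa using this
          rcases hkne.lt_or_gt with hlt | hgt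
          · exfalso
            have hkE : k ∈ extremalIndices n x :=
              (mem_extremal n x k).2 (Or.inr (Or.inr ⟨by omega, by omega, hlt⟩))
            have hks : k ∈ s := Finset.mem_erase.2 ⟨by omega, hkE⟩
            have := Finset.le_max' s k hks
            omega
          · rw [if_pos hgt]
        · rw [if_neg hi]
          push_neg at hi
          have hmem : τ ∈ Finset.Ico i n := Finset.mem_Ico.2 ⟨hi, hτlt⟩
          apply Finset.prod_eq_zero hmem
          have hτP : (x τ - x (τ - 1)) * (x (τ + 1) - x τ) < 0 := by
            rcases (mem_extremal n x τ).1 hτE with h0 | h0 | ⟨-, -, hP⟩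
            · omega
            · exact absurd h0 hτne
            · exact hP
          rw [if_neg (by linarith)]
      have hkey : ∑ i ∈ Finset.Icc 1 n,
          (x i - x (i - 1)) *
            ∏ k ∈ Finset.Ico i n,
              (if 0 < (x k - x (k - 1)) * (x (k + 1) - x k) then (1 : ℝ) else 0)
          = x n - x τ := by
        have step1 : ∀ i ∈ Finset.Icc 1 n,
            (x i - x (i - 1)) *
              ∏ k ∈ Finset.Ico i n,
                (if 0 < (x k - x (k - 1)) * (x (k + 1) - x k) then (1 : ℝ) else 0)
            = if τ < i then (x i - x (i - 1)) else 0 := by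
          intro i hi
          rw [Finset.mem_Icc] at hi
          rw [hprodchar i hi.1 hi.2, mul_ite, mul_one, mul_zero]
        have hfil : (Finset.Icc 1 n).filter (fun i => τ < i) = Finset.Icc (τ + 1) n := by
          ext i
          simp only [Finset.mem_filter, Finset.mem_Icc]
          omega
        rw [Finset.sum_congr rfl step1, ← Finset.sum_filter, hfil,
          tele x τ n (le_of_lt hτlt)]
      have hcross : ∑ i ∈ Finset.Ico 1 (n + 1),
          (x i - x (i - 1)) * (x (n + 1) - x n) *
            ∏ k ∈ Finset.Ico i (n + 1),
              (if 0 < (x k - x (k - 1)) * (x (k + 1) - x k) then (1 : ℝ) else 0)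
          = (x (n + 1) - x n) * (x n - x τ) := by
        have step2 : ∀ i ∈ Finset.Icc 1 n,
            (x i - x (i - 1)) * (x (n + 1) - x n) *
              ∏ k ∈ Finset.Ico i (n + 1),
                (if 0 < (x k - x (k - 1)) * (x (k + 1) - x k) then (1 : ℝ) else 0)
            = (x (n + 1) - x n) * ((x i - x (i - 1)) *
              ∏ k ∈ Finset.Ico i n,
                (if 0 < (x k - x (k - 1)) * (x (k + 1) - x k) then (1 : ℝ) else 0)) := by
          intro i hi
          rw [Finset.mem_Icc] at hi
          rw [Finset.prod_Ico_succ_top (by omega : i ≤ n), if_pos hpos, mul_one]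
          ring
        rw [show Finset.Ico 1 (n + 1) = Finset.Icc 1 n from Finset.Ico_add_one_right_eq_Icc 1 n,
          Finset.sum_congr rfl step2, ← Finset.mul_sum, hkey]
      rw [hLHS, IH, qvRHS_succ, hcross]
      ring

theorem extQV_eq_qv_add_cross (n : ℕ) (hn : 1 ≤ n) (x : ℕ → ℝ)
    (hx : ∀ k, 1 ≤ k → k ≤ n → x k - x (k - 1) ≠ 0) :
    extQV n x =
      (∑ k ∈ Finset.Icc 1 n, (x k - x (k - 1)) ^ 2) +
        2 * ∑ j ∈ Finset.Icc 1 n, ∑ i ∈ Finset.Ico 1 j,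
          (x i - x (i - 1)) * (x j - x (j - 1)) *
            ∏ k ∈ Finset.Ico i j,
              (if 0 < (x k - x (k - 1)) * (x (k + 1) - x k) then (1 : ℝ) else 0) := by
  exact extQV_eq_qvRHS x n hn hx
end

section
/- Let n ≥ 2 and let Z_1, …, Z_n be real random variables on a probability space such that: (i) (stationarity) for every 1 ≤ j and every length l ≥ 1 with j + l − 1 ≤ n, the joint law of (Z_j, Z_{j+1}, …, Z_{j+l−1}) equals the joint law of (Z_1, Z_2, …, Z_l); (ii) (symmetry) the law of (Z_1, …, Z_n) equals the law of (−Z_1, …, −Z_n); (iii) all the products appearing below are integrable. Then Σ_{i=2}^n Σ_{j=1}^{i−1} E[ Z_i Z_j Π_{k=j}^{i−1} 1{Z_k Z_{k+1} > 0} ] = 2 Σ_{k=2}^n (n+1−k) · E[ Z_1 Z_k Π_{j=1}^{k} 1{Z_j > 0} ]. -/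
open MeasureTheory Finset


lemma measInd_pos {α : Type*} [MeasurableSpace α] {f : α → ℝ} (hf : Measurable f) :
    Measurable (fun x => if 0 < f x then (1:ℝ) else 0) :=
  Measurable.ite (measurableSet_lt measurable_const hf) measurable_const measurable_const

lemma measInd_neg {α : Type*} [MeasurableSpace α] {f : α → ℝ} (hf : Measurable f) :
    Measurable (fun x => if f x < 0 then (1:ℝ) else 0) :=
  Measurable.ite (measurableSet_lt hf measurable_const) measurable_const measurable_const

lemma prod_sign_split (a : ℕ → ℝ) (k : ℕ) (hk : 1 ≤ k) :
    (∏ m ∈ Finset.Ico 1 k, (if 0 < a m * a (m+1) then (1:ℝ) else 0)) *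
      ((if 0 < a 1 then (1:ℝ) else 0) + (if a 1 < 0 then (1:ℝ) else 0)) =
    (∏ j ∈ Finset.Icc 1 k, (if 0 < a j then (1:ℝ) else 0)) +
      ∏ j ∈ Finset.Icc 1 k, (if a j < 0 then (1:ℝ) else 0) := by
  induction k, hk using Nat.le_induction with
  | base => simp
  | succ k hk1 ih =>
    rw [Finset.prod_Ico_succ_top hk1, Finset.prod_Icc_succ_top (by omega : 1 ≤ k+1),
      Finset.prod_Icc_succ_top (by omega : 1 ≤ k+1), mul_right_comm, ih]
    have hP : (∏ j ∈ Finset.Icc 1 k, (if 0 < a j then (1:ℝ) else 0)) *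
        (if 0 < a k * a (k+1) then (1:ℝ) else 0) =
        (∏ j ∈ Finset.Icc 1 k, (if 0 < a j then (1:ℝ) else 0)) *
        (if 0 < a (k+1) then (1:ℝ) else 0) := by
      by_cases h : 0 < a k
      · have : (0 < a k * a (k+1)) ↔ (0 < a (k+1)) := by
          constructor
          · intro hh; nlinarith
          · intro hh; positivity
        simp only [this]
      · have hz : (∏ j ∈ Finset.Icc 1 k, (if 0 < a j then (1:ℝ) else 0)) = 0 :=
          Finset.prod_eq_zero (Finset.mem_Icc.mpr ⟨hk1, le_refl k⟩) (by simp [h])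
        rw [hz, zero_mul, zero_mul]
    have hN : (∏ j ∈ Finset.Icc 1 k, (if a j < 0 then (1:ℝ) else 0)) *
        (if 0 < a k * a (k+1) then (1:ℝ) else 0) =
        (∏ j ∈ Finset.Icc 1 k, (if a j < 0 then (1:ℝ) else 0)) *
        (if a (k+1) < 0 then (1:ℝ) else 0) := by
      by_cases h : a k < 0
      · have : (0 < a k * a (k+1)) ↔ (a (k+1) < 0) := by
          rw [mul_pos_iff]
          constructor
          · rintro (⟨h1, _⟩ | ⟨_, h2⟩)
            · linarith
            · exact h2
          · intro h2; right; exact ⟨h, h2⟩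
        simp only [this]
      · have hz : (∏ j ∈ Finset.Icc 1 k, (if a j < 0 then (1:ℝ) else 0)) = 0 :=
          Finset.prod_eq_zero (Finset.mem_Icc.mpr ⟨hk1, le_refl k⟩) (by simp [h])
        rw [hz, zero_mul, zero_mul]
    rw [add_mul, hP, hN]

lemma prod_sign_split' (a : ℕ → ℝ) (k : ℕ) (hk : 2 ≤ k) :
    (∏ m ∈ Finset.Ico 1 k, (if 0 < a m * a (m+1) then (1:ℝ) else 0)) =
    (∏ j ∈ Finset.Icc 1 k, (if 0 < a j then (1:ℝ) else 0)) +
      ∏ j ∈ Finset.Icc 1 k, (if a j < 0 then (1:ℝ) else 0) := by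
  rw [← prod_sign_split a k (by omega)]
  by_cases h : (0:ℝ) < a 1 * a 2
  · have h1 : a 1 ≠ 0 := by
      rintro h0
      rw [h0, zero_mul] at h
      exact lt_irrefl 0 h
    rcases h1.lt_or_gt with h' | h'
    · simp [h', asymm h']
    · simp [h', asymm h']
  · have hprod : (∏ m ∈ Finset.Ico 1 k, (if 0 < a m * a (m+1) then (1:ℝ) else 0)) = 0 :=
      Finset.prod_eq_zero (Finset.mem_Ico.mpr ⟨le_refl 1, by omega⟩) (by simp [h])
    rw [hprod, zero_mul]



lemma count_sum (C : ℕ → ℝ) (n : ℕ) :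
    ∑ i ∈ Finset.Icc 2 n, ∑ j ∈ Finset.Ico 1 i, C (i - j + 1) =
    ∑ k ∈ Finset.Icc 2 n, ((n + 1 - k : ℕ) : ℝ) * C k := by
  induction n with
  | zero => simp
  | succ n ih =>
    rcases Nat.eq_zero_or_pos n with rfl | hn
    · simp
    have h1 : ∑ j ∈ Finset.Ico 1 (n+1), C (n + 1 - j + 1) =
        ∑ k ∈ Finset.Icc 2 (n+1), C k := by
      rw [Finset.sum_Ico_eq_sum_range,
        show Finset.Icc 2 (n+1) = Finset.Ico 2 (n+2) from (Finset.Ico_add_one_right_eq_Icc _ _).symm,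
        Finset.sum_Ico_eq_sum_range, ← Finset.sum_range_reflect]
      apply Finset.sum_congr (by congr 1 <;> omega)
      intro i hi
      rw [Finset.mem_range] at hi
      congr 1
      omega
    have h2 : ∑ k ∈ Finset.Icc 2 (n+1), ((n + 1 + 1 - k : ℕ) : ℝ) * C k =
        ∑ k ∈ Finset.Icc 2 n, ((n + 1 - k : ℕ) : ℝ) * C k + ∑ k ∈ Finset.Icc 2 (n+1), C k := by
      have : ∑ k ∈ Finset.Icc 2 (n+1), ((n + 1 + 1 - k : ℕ) : ℝ) * C k =
          ∑ k ∈ Finset.Icc 2 (n+1), (((n + 1 - k : ℕ) : ℝ) * C k + C k) := by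
        apply Finset.sum_congr rfl
        intro k hk
        rw [Finset.mem_Icc] at hk
        have e : (n + 1 + 1 - k : ℕ) = (n + 1 - k) + 1 := by omega
        rw [e]
        push_cast
        ring
      rw [this, Finset.sum_add_distrib, Finset.sum_Icc_succ_top (by omega : 2 ≤ n+1)]
      simp
    rw [Finset.sum_Icc_succ_top (by omega : 2 ≤ n+1), ih, h1, h2]

lemma sym_transfer {Ω : Type*} [MeasurableSpace Ω] (P : Measure Ω) [IsProbabilityMeasure P]
    (n : ℕ) (Z : ℕ → Ω → ℝ) (hmeas : ∀ i, Measurable (Z i))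
    (hsym : Measure.map (fun ω => fun i : Fin n => Z (1 + (i : ℕ)) ω) P =
      Measure.map (fun ω => fun i : Fin n => -Z (1 + (i : ℕ)) ω) P)
    (k : ℕ) (hk2 : 2 ≤ k) (hkn : k ≤ n)
    (hpos : Integrable (fun ω => Z 1 ω * Z k ω *
      ∏ j ∈ Finset.Icc 1 k, (if 0 < Z j ω then (1:ℝ) else 0)) P) :
    Integrable (fun ω => Z 1 ω * Z k ω *
      ∏ j ∈ Finset.Icc 1 k, (if Z j ω < 0 then (1:ℝ) else 0)) P ∧
    ∫ ω, Z 1 ω * Z k ω * ∏ j ∈ Finset.Icc 1 k, (if Z j ω < 0 then (1:ℝ) else 0) ∂P =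
      ∫ ω, Z 1 ω * Z k ω * ∏ j ∈ Finset.Icc 1 k, (if 0 < Z j ω then (1:ℝ) else 0) ∂P := by
  have h0n : (0:ℕ) < n := by omega
  have hk1n : k - 1 < n := by omega
  set G : Ω → (Fin n → ℝ) := fun ω m => Z (1 + (m:ℕ)) ω with hGdef
  have hG : Measurable G := measurable_pi_lambda _ fun m => hmeas _
  set g : (Fin n → ℝ) → ℝ := fun x => x ⟨0, h0n⟩ * x ⟨k-1, hk1n⟩ *
    ∏ m : Fin n, (if (m:ℕ) < k then (if 0 < x m then (1:ℝ) else 0) else 1) with hgdef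
  set g' : (Fin n → ℝ) → ℝ := fun x => x ⟨0, h0n⟩ * x ⟨k-1, hk1n⟩ *
    ∏ m : Fin n, (if (m:ℕ) < k then (if x m < 0 then (1:ℝ) else 0) else 1) with hg'def
  have hg : Measurable g := by
    apply Measurable.mul
    · exact (measurable_pi_apply _).mul (measurable_pi_apply _)
    · apply Finset.measurable_prod
      intro m _
      by_cases h : (m:ℕ) < k
      · simpa [h] using measInd_pos (measurable_pi_apply m)
      · simp [h]

  have hg' : Measurable g' := by
    apply Measurable.mul
    · exact (measurable_pi_apply _).mul (measurable_pi_apply _)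
    · apply Finset.measurable_prod
      intro m _
      by_cases h : (m:ℕ) < k
      · simpa [h] using measInd_neg (measurable_pi_apply m)
      · simp [h]
  have hne : g ∘ Neg.neg = g' := by
    funext x
    simp only [hgdef, hg'def, Function.comp_apply, Pi.neg_apply, neg_mul_neg, neg_pos]
  have hmu : Measure.map G P = Measure.map Neg.neg (Measure.map G P) := by
    rw [Measure.map_map measurable_neg hG]
    exact hsym
  have hprods : ∀ (f : ℕ → ℝ), (∏ m : Fin n, (if (m:ℕ) < k then f (1 + (m:ℕ)) else 1)) =
      ∏ j ∈ Finset.Icc 1 k, f j := by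
    intro f
    calc (∏ m : Fin n, (if (m:ℕ) < k then f (1 + (m:ℕ)) else 1))
        = ∏ m ∈ Finset.range n, (if m < k then f (1 + m) else 1) :=
          Fin.prod_univ_eq_prod_range (fun m => if m < k then f (1 + m) else 1) n
      _ = ∏ m ∈ (Finset.range n).filter (· < k), f (1 + m) := (Finset.prod_filter _ _).symm
      _ = ∏ m ∈ Finset.range k, f (1 + m) := by
          congr 1
          ext m
          simp only [Finset.mem_filter, Finset.mem_range]
          omega
      _ = ∏ j ∈ Finset.Ico 1 (k+1), f j := by
          rw [Finset.prod_Ico_eq_prod_range]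
          simp
      _ = ∏ j ∈ Finset.Icc 1 k, f j := by rw [Finset.Ico_add_one_right_eq_Icc]
  have hcomp_pos : (fun ω => g (G ω)) = fun ω => Z 1 ω * Z k ω *
      ∏ j ∈ Finset.Icc 1 k, (if 0 < Z j ω then (1:ℝ) else 0) := by
    funext ω
    simp only [hgdef, hGdef]
    rw [hprods (fun j => if 0 < Z j ω then (1:ℝ) else 0)]
    have e1 : (1 + ((⟨k-1, hk1n⟩ : Fin n) : ℕ)) = k := by
      show 1 + (k - 1) = k
      omega
    rw [e1]
  have hcomp_neg : (fun ω => g' (G ω)) = fun ω => Z 1 ω * Z k ω *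
      ∏ j ∈ Finset.Icc 1 k, (if Z j ω < 0 then (1:ℝ) else 0) := by
    funext ω
    simp only [hg'def, hGdef]
    rw [hprods (fun j => if Z j ω < 0 then (1:ℝ) else 0)]
    have e1 : (1 + ((⟨k-1, hk1n⟩ : Fin n) : ℕ)) = k := by
      show 1 + (k - 1) = k
      omega
    rw [e1]
  have hintg : Integrable (fun ω => g (G ω)) P := by rw [hcomp_pos]; exact hpos
  have h1 : Integrable g (Measure.map G P) :=
    (integrable_map_measure hg.aestronglyMeasurable hG.aemeasurable).mpr hintg
  have h2 : Integrable g (Measure.map Neg.neg (Measure.map G P)) := by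
    rw [← hmu]; exact h1
  have h3 : Integrable (g ∘ Neg.neg) (Measure.map G P) :=
    (integrable_map_measure (by rw [← hmu]; exact hg.aestronglyMeasurable)
      measurable_neg.aemeasurable).mp h2
  have h4 : Integrable g' (Measure.map G P) := by rwa [hne] at h3
  have h5 : Integrable (fun ω => g' (G ω)) P :=
    (integrable_map_measure hg'.aestronglyMeasurable hG.aemeasurable).mp h4
  constructor
  · rw [← hcomp_neg]; exact h5
  · have i1 : ∫ ω, g' (G ω) ∂P = ∫ x, g' x ∂(Measure.map G P) :=
      (integral_map hG.aemeasurable hg'.aestronglyMeasurable).symm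
    have i2 : ∫ x, g' x ∂(Measure.map G P) =
        ∫ x, (g ∘ Neg.neg) x ∂(Measure.map G P) := by rw [hne]
    have i3 : ∫ x, (g ∘ Neg.neg) x ∂(Measure.map G P) =
        ∫ x, g x ∂(Measure.map Neg.neg (Measure.map G P)) :=
      (integral_map measurable_neg.aemeasurable
        (by rw [← hmu]; exact hg.aestronglyMeasurable)).symm
    have i4 : ∫ x, g x ∂(Measure.map Neg.neg (Measure.map G P)) =
        ∫ x, g x ∂(Measure.map G P) := by rw [← hmu]
    have i5 : ∫ x, g x ∂(Measure.map G P) = ∫ ω, g (G ω) ∂P :=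
      integral_map hG.aemeasurable hg.aestronglyMeasurable
    rw [← hcomp_neg, ← hcomp_pos]
    rw [i1, i2, i3, i4, i5]

lemma stat_transfer {Ω : Type*} [MeasurableSpace Ω] (P : Measure Ω) [IsProbabilityMeasure P]
    (n : ℕ) (Z : ℕ → Ω → ℝ) (hmeas : ∀ i, Measurable (Z i))
    (hstat : ∀ j l : ℕ, 1 ≤ j → 1 ≤ l → j + l - 1 ≤ n →
      Measure.map (fun ω => fun i : Fin l => Z (j + (i : ℕ)) ω) P =
        Measure.map (fun ω => fun i : Fin l => Z (1 + (i : ℕ)) ω) P)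
    (j d : ℕ) (hj : 1 ≤ j) (hd : 1 ≤ d) (hjd : j + d ≤ n) :
    ∫ ω, Z (j+d) ω * Z j ω *
        ∏ k ∈ Finset.Ico j (j+d), (if 0 < Z k ω * Z (k+1) ω then (1:ℝ) else 0) ∂P =
    ∫ ω, Z (1+d) ω * Z 1 ω *
        ∏ k ∈ Finset.Ico 1 (1+d), (if 0 < Z k ω * Z (k+1) ω then (1:ℝ) else 0) ∂P := by
  set g : (Fin (d+1) → ℝ) → ℝ := fun x => x (Fin.last d) * x 0 *
    ∏ m : Fin d, (if 0 < x m.castSucc * x m.succ then (1:ℝ) else 0) with hgdef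
  have hg : Measurable g := by
    apply Measurable.mul
    · exact (measurable_pi_apply _).mul (measurable_pi_apply _)
    · exact Finset.measurable_prod _ fun m _ =>
        measInd_pos ((measurable_pi_apply _).mul (measurable_pi_apply _))
  have hF : ∀ b : ℕ, Measurable (fun ω => fun m : Fin (d+1) => Z (b + (m:ℕ)) ω) :=
    fun b => measurable_pi_lambda _ fun m => hmeas _
  have hcomp : ∀ b : ℕ, (fun ω => g (fun m : Fin (d+1) => Z (b + (m:ℕ)) ω)) =
      fun ω => Z (b+d) ω * Z b ω *
        ∏ k ∈ Finset.Ico b (b+d), (if 0 < Z k ω * Z (k+1) ω then (1:ℝ) else 0) := by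
    intro b
    funext ω
    simp only [hgdef, Fin.val_last, Fin.val_zero, Nat.add_zero, Fin.coe_castSucc, Fin.val_succ, ← Nat.add_assoc]
    congr 1
    calc (∏ m : Fin d, if 0 < Z (b + (m:ℕ)) ω * Z (b + ((m:ℕ) + 1)) ω then (1:ℝ) else 0)
        = ∏ m ∈ Finset.range d, (if 0 < Z (b + m) ω * Z (b + m + 1) ω then (1:ℝ) else 0) := by
          rw [Fin.prod_univ_eq_prod_range
            (fun m => if 0 < Z (b + m) ω * Z (b + (m + 1)) ω then (1:ℝ) else 0) d]
          exact Finset.prod_congr rfl fun m _ => by rw [← Nat.add_assoc]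
      _ = ∏ k ∈ Finset.Ico b (b+d), (if 0 < Z k ω * Z (k+1) ω then (1:ℝ) else 0) := by
          rw [Finset.prod_Ico_eq_prod_range]
          simp
  have hmap := hstat j (d+1) hj (by omega) (by omega)
  calc ∫ ω, Z (j+d) ω * Z j ω *
        ∏ k ∈ Finset.Ico j (j+d), (if 0 < Z k ω * Z (k+1) ω then (1:ℝ) else 0) ∂P
      = ∫ ω, g (fun m : Fin (d+1) => Z (j + (m:ℕ)) ω) ∂P := by rw [hcomp j]
    _ = ∫ x, g x ∂(Measure.map (fun ω => fun m : Fin (d+1) => Z (j + (m:ℕ)) ω) P) :=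
        (integral_map (hF j).aemeasurable hg.aestronglyMeasurable).symm
    _ = ∫ x, g x ∂(Measure.map (fun ω => fun m : Fin (d+1) => Z (1 + (m:ℕ)) ω) P) := by
        rw [hmap]
    _ = ∫ ω, g (fun m : Fin (d+1) => Z (1 + (m:ℕ)) ω) ∂P :=
        integral_map (hF 1).aemeasurable hg.aestronglyMeasurable
    _ = ∫ ω, Z (1+d) ω * Z 1 ω *
        ∏ k ∈ Finset.Ico 1 (1+d), (if 0 < Z k ω * Z (k+1) ω then (1:ℝ) else 0) ∂P := by
        rw [hcomp 1]


theorem stationary_symmetric_cross_sum {Ω : Type*} [MeasurableSpace Ω]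
    (P : Measure Ω) [IsProbabilityMeasure P]
    (n : ℕ) (hn : 2 ≤ n) (Z : ℕ → Ω → ℝ) (hmeas : ∀ i, Measurable (Z i))
    (hstat : ∀ j l : ℕ, 1 ≤ j → 1 ≤ l → j + l - 1 ≤ n →
      Measure.map (fun ω => fun i : Fin l => Z (j + (i : ℕ)) ω) P =
        Measure.map (fun ω => fun i : Fin l => Z (1 + (i : ℕ)) ω) P)
    (hsym : Measure.map (fun ω => fun i : Fin n => Z (1 + (i : ℕ)) ω) P =
      Measure.map (fun ω => fun i : Fin n => -Z (1 + (i : ℕ)) ω) P)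
    (hint₁ : ∀ i j : ℕ, 1 ≤ j → j < i → i ≤ n →
      Integrable (fun ω => Z i ω * Z j ω *
        ∏ k ∈ Finset.Ico j i, (if 0 < Z k ω * Z (k + 1) ω then (1 : ℝ) else 0)) P)
    (hint₂ : ∀ k : ℕ, 2 ≤ k → k ≤ n →
      Integrable (fun ω => Z 1 ω * Z k ω *
        ∏ j ∈ Finset.Icc 1 k, (if 0 < Z j ω then (1 : ℝ) else 0)) P) :
    ∑ i ∈ Finset.Icc 2 n, ∑ j ∈ Finset.Ico 1 i,
        ∫ ω, Z i ω * Z j ω *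
          ∏ k ∈ Finset.Ico j i, (if 0 < Z k ω * Z (k + 1) ω then (1 : ℝ) else 0) ∂P =
      2 * ∑ k ∈ Finset.Icc 2 n, ((n + 1 - k : ℕ) : ℝ) *
        ∫ ω, Z 1 ω * Z k ω *
          ∏ j ∈ Finset.Icc 1 k, (if 0 < Z j ω then (1 : ℝ) else 0) ∂P := by
  have key : ∀ i ∈ Finset.Icc 2 n, ∀ j ∈ Finset.Ico 1 i,
      (∫ ω, Z i ω * Z j ω *
        ∏ k ∈ Finset.Ico j i, (if 0 < Z k ω * Z (k + 1) ω then (1 : ℝ) else 0) ∂P) =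
      2 * ∫ ω, Z 1 ω * Z (i - j + 1) ω *
        ∏ m ∈ Finset.Icc 1 (i - j + 1), (if 0 < Z m ω then (1 : ℝ) else 0) ∂P := by
    intro i hi j hj
    rw [Finset.mem_Icc] at hi
    rw [Finset.mem_Ico] at hj
    obtain ⟨d, rfl⟩ : ∃ d, i = j + d := ⟨i - j, by omega⟩
    have hj1 : 1 ≤ j := hj.1
    have hd : 1 ≤ d := by omega
    have hjd : j + d ≤ n := by omega
    have hd1 : j + d - j + 1 = d + 1 := by omega
    rw [hd1, stat_transfer P n Z hmeas hstat j d hj1 hd hjd]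
    have hk2 : 2 ≤ d + 1 := by omega
    have hkn : d + 1 ≤ n := hjd.trans' (by omega)
    have hpos := hint₂ (d + 1) hk2 hkn
    obtain ⟨hnegint, hnegeq⟩ := sym_transfer P n Z hmeas hsym (d + 1) hk2 hkn hpos
    have hpt : (fun ω => Z (1 + d) ω * Z 1 ω *
        ∏ k ∈ Finset.Ico 1 (1 + d), (if 0 < Z k ω * Z (k + 1) ω then (1 : ℝ) else 0)) =
        fun ω => (Z 1 ω * Z (d + 1) ω *
            ∏ m ∈ Finset.Icc 1 (d + 1), (if 0 < Z m ω then (1 : ℝ) else 0)) +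
          Z 1 ω * Z (d + 1) ω *
            ∏ m ∈ Finset.Icc 1 (d + 1), (if Z m ω < 0 then (1 : ℝ) else 0) := by
      funext ω
      have e : 1 + d = d + 1 := Nat.add_comm 1 d
      rw [e, prod_sign_split' (fun m => Z m ω) (d + 1) hk2]
      ring
    rw [hpt, integral_add hpos hnegint, hnegeq]
    ring
  have step1 : ∑ i ∈ Finset.Icc 2 n, ∑ j ∈ Finset.Ico 1 i,
      (∫ ω, Z i ω * Z j ω *
        ∏ k ∈ Finset.Ico j i, (if 0 < Z k ω * Z (k + 1) ω then (1 : ℝ) else 0) ∂P) =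
      ∑ i ∈ Finset.Icc 2 n, ∑ j ∈ Finset.Ico 1 i,
        2 * ∫ ω, Z 1 ω * Z (i - j + 1) ω *
          ∏ m ∈ Finset.Icc 1 (i - j + 1), (if 0 < Z m ω then (1 : ℝ) else 0) ∂P :=
    Finset.sum_congr rfl fun i hi => Finset.sum_congr rfl fun j hj => key i hi j hj
  rw [step1]
  simp only [← Finset.mul_sum]
  rw [count_sum (fun m => ∫ ω, Z 1 ω * Z m ω *
    ∏ j ∈ Finset.Icc 1 m, (if 0 < Z j ω then (1 : ℝ) else 0) ∂P) n]
end

section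
/- Fix ε > 0. Then lim_{n→∞} ε² · ( 1 − e^{−1/(n ε²)} )² · Σ_{k=2}^n (n+1−k) · e^{−(k−1)/(n ε²)} = 1 + ε² ( e^{−1/ε²} − 1 ). -/
open Filter

private lemma geom_aux (q : ℝ) (n : ℕ) :
    (1 - q) * ∑ k ∈ Finset.Icc 2 (n + 1), q ^ (k - 1) = q - q ^ (n + 1) := by
  induction n with
  | zero => simp
  | succ n ih =>
    rw [Finset.sum_Icc_succ_top (by omega : 2 ≤ n + 1 + 1)]
    have : (n + 1 + 1 : ℕ) - 1 = n + 1 := by omega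
    rw [this]
    linear_combination ih

private lemma key_aux (q : ℝ) (n : ℕ) :
    (1 - q) ^ 2 * ∑ k ∈ Finset.Icc 2 n, (((n : ℝ) + 1) - k) * q ^ (k - 1)
      = ((n : ℝ) - 1) * q - n * q ^ 2 + q ^ (n + 1) := by
  induction n with
  | zero => simp
  | succ n ih =>
    rcases Nat.eq_zero_or_pos n with h | h
    · subst h
      simp [show Finset.Icc 2 1 = (∅ : Finset ℕ) by rfl]
    · have h2 : 2 ≤ n + 1 := by omega
      have split : ∑ k ∈ Finset.Icc 2 (n + 1), ((((n : ℕ) + 1 : ℕ) : ℝ) + 1 - k) * q ^ (k - 1)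
          = (∑ k ∈ Finset.Icc 2 (n + 1), (((n : ℝ) + 1) - k) * q ^ (k - 1))
            + ∑ k ∈ Finset.Icc 2 (n + 1), q ^ (k - 1) := by
        rw [← Finset.sum_add_distrib]
        refine Finset.sum_congr rfl fun k _ => ?_
        push_cast
        ring
      have e1 : ∑ k ∈ Finset.Icc 2 (n + 1), (((n : ℝ) + 1) - k) * q ^ (k - 1)
          = ∑ k ∈ Finset.Icc 2 n, (((n : ℝ) + 1) - k) * q ^ (k - 1) := by
        rw [Finset.sum_Icc_succ_top h2]
        simp
      rw [split, e1]
      have hg := geom_aux q n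
      push_cast
      linear_combination ih + (1 - q) * hg

theorem weighted_exp_sum_limit (ε : ℝ) (hε : 0 < ε) :
    Tendsto (fun n : ℕ =>
        ε ^ 2 * (1 - Real.exp (-1 / (n * ε ^ 2))) ^ 2 *
          ∑ k ∈ Finset.Icc 2 n,
            ((n + 1 - k : ℕ) : ℝ) * Real.exp (-((k : ℝ) - 1) / (n * ε ^ 2)))
      atTop (nhds (1 + ε ^ 2 * (Real.exp (-1 / ε ^ 2) - 1))) := by
  have hε2 : (0 : ℝ) < ε ^ 2 := by positivity
  set q : ℕ → ℝ := fun n => Real.exp (-1 / ((n : ℝ) * ε ^ 2)) with hqdef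
  -- 1/(n ε²) → 0
  have hD : Tendsto (fun n : ℕ => (n : ℝ) * ε ^ 2) atTop atTop :=
    tendsto_natCast_atTop_atTop.atTop_mul_const hε2
  have h0 : Tendsto (fun n : ℕ => ((n : ℝ) * ε ^ 2)⁻¹) atTop (nhds 0) :=
    hD.inv_tendsto_atTop
  -- q n → 1
  have hq : Tendsto q atTop (nhds 1) := by
    have harg : Tendsto (fun n : ℕ => -1 / ((n : ℝ) * ε ^ 2)) atTop (nhds 0) := by
      have := h0.neg
      simpa [neg_div, one_div] using this
    have := (Real.continuous_exp.tendsto 0).comp harg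
    simpa [hqdef, Function.comp_def] using this
  -- n (1 - q n) → (ε²)⁻¹
  have hB : Tendsto (fun n : ℕ => (n : ℝ) * (1 - q n)) atTop (nhds ((ε ^ 2)⁻¹)) := by
    have hderiv : HasDerivAt (fun x : ℝ => Real.exp (-x)) (-1) 0 := by
      simpa using ((hasDerivAt_id (0 : ℝ)).neg.exp)
    have hslope := hasDerivAt_iff_tendsto_slope.mp hderiv
    have hx : Tendsto (fun n : ℕ => ((n : ℝ) * ε ^ 2)⁻¹) atTop (nhdsWithin 0 {(0:ℝ)}ᶜ) := by
      refine tendsto_nhdsWithin_of_tendsto_nhds_of_eventually_within _ h0 ?_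
      filter_upwards [eventually_gt_atTop 0] with n hn
      have hpos : (0 : ℝ) < (n : ℝ) * ε ^ 2 := by positivity
      simp only [Set.mem_compl_iff, Set.mem_singleton_iff]
      exact inv_ne_zero (ne_of_gt hpos)
    have hcomp := hslope.comp hx
    have := (hcomp.neg).div_const (ε ^ 2)
    rw [show (- -1 : ℝ) / ε ^ 2 = (ε ^ 2)⁻¹ by norm_num] at this
    refine Tendsto.congr' ?_ this
    filter_upwards [eventually_gt_atTop 0] with n hn
    have hpos : (0 : ℝ) < (n : ℝ) * ε ^ 2 := by positivity
    have hne : ((n : ℝ) * ε ^ 2) ≠ 0 := ne_of_gt hpos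
    simp only [Function.comp, slope_def_field, hqdef]
    simp only [neg_zero, Real.exp_zero, sub_zero]
    have hexp : Real.exp (-((n : ℝ) * ε ^ 2)⁻¹) = Real.exp (-1 / ((n : ℝ) * ε ^ 2)) := by
      congr 1
      field_simp
    rw [hexp]
    field_simp
    ring
  -- q n ^ (n+1) → exp (-1/ε²)
  have hC : Tendsto (fun n : ℕ => q n ^ (n + 1)) atTop (nhds (Real.exp (-1 / ε ^ 2))) := by
    have harg : Tendsto (fun n : ℕ => ((n : ℝ) + 1) * (-1 / ((n : ℝ) * ε ^ 2))) atTop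
        (nhds (-1 / ε ^ 2)) := by
      have hsum : Tendsto (fun n : ℕ => -1 / ε ^ 2 + (-((n : ℝ) * ε ^ 2)⁻¹)) atTop
          (nhds (-1 / ε ^ 2 + -0)) := tendsto_const_nhds.add h0.neg
      rw [neg_zero, add_zero] at hsum
      refine Tendsto.congr' ?_ hsum
      filter_upwards [eventually_gt_atTop 0] with n hn
      have hne : (n : ℝ) ≠ 0 := by positivity
      have hne2 : (ε : ℝ) ≠ 0 := ne_of_gt hε
      field_simp
      ring
    have := (Real.continuous_exp.tendsto _).comp harg
    refine Tendsto.congr ?_ this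
    intro n
    simp only [Function.comp, hqdef]
    rw [← Real.exp_nat_mul]
    push_cast
    ring_nf
  -- combine
  have final : Tendsto (fun n : ℕ =>
      ε ^ 2 * (q n * ((n : ℝ) * (1 - q n)) - q n + q n ^ (n + 1))) atTop
      (nhds (ε ^ 2 * (1 * (ε ^ 2)⁻¹ - 1 + Real.exp (-1 / ε ^ 2)))) :=
    (((hq.mul hB).sub hq).add hC).const_mul (ε ^ 2)
  have hval : ε ^ 2 * (1 * (ε ^ 2)⁻¹ - 1 + Real.exp (-1 / ε ^ 2))
      = 1 + ε ^ 2 * (Real.exp (-1 / ε ^ 2) - 1) := by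
    have hne : (ε : ℝ) ≠ 0 := ne_of_gt hε
    field_simp
    ring
  rw [hval] at final
  refine Tendsto.congr' ?_ final
  filter_upwards with n
  have hS : ∑ k ∈ Finset.Icc 2 n, ((n + 1 - k : ℕ) : ℝ) * Real.exp (-((k : ℝ) - 1) / ((n : ℝ) * ε ^ 2))
      = ∑ k ∈ Finset.Icc 2 n, (((n : ℝ) + 1) - k) * (q n) ^ (k - 1) := by
    refine Finset.sum_congr rfl fun k hk => ?_
    simp only [Finset.mem_Icc] at hk
    have hc : ((n + 1 - k : ℕ) : ℝ) = (n : ℝ) + 1 - k := by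
      rw [Nat.cast_sub (by omega)]
      push_cast
      ring
    have he : Real.exp (-((k : ℝ) - 1) / ((n : ℝ) * ε ^ 2)) = (q n) ^ (k - 1) := by
      simp only [hqdef]
      rw [← Real.exp_nat_mul]
      congr 1
      rw [Nat.cast_sub (by omega : 1 ≤ k)]
      push_cast
      ring
    rw [hc, he]
  have hkey := key_aux (q n) n
  rw [hS] at *
  linear_combination (-ε ^ 2) * hkey
end

section
/- Let g : ℝ → ℝ be continuous with g(0) > 0, suppose S = { t > 0 : g(t) < 0 } is nonempty, and let τ = inf S. Then: (i) for all sufficiently large positive integers n, the set { k ∈ ℕ : g(k/n) < 0 } is nonempty; (ii) letting k_n denote its least element for such n, the grid first-crossing times converge, lim_{n→∞} k_n / n = τ; and (iii) the values at the first crossing converge to zero, lim_{n→∞} g( k_n / n ) = 0. -/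
open Filter

theorem grid_first_crossing_converges (g : ℝ → ℝ) (hg : Continuous g) (h0 : 0 < g 0)
    (hS : {t : ℝ | 0 < t ∧ g t < 0}.Nonempty) :
    (∀ᶠ n : ℕ in atTop, {k : ℕ | g ((k : ℝ) / n) < 0}.Nonempty) ∧
      Tendsto (fun n : ℕ => ((sInf {k : ℕ | g ((k : ℝ) / n) < 0} : ℕ) : ℝ) / n)
        atTop (nhds (sInf {t : ℝ | 0 < t ∧ g t < 0})) ∧
      Tendsto (fun n : ℕ => g (((sInf {k : ℕ | g ((k : ℝ) / n) < 0} : ℕ) : ℝ) / n))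
        atTop (nhds 0) := by
  set S : Set ℝ := {t : ℝ | 0 < t ∧ g t < 0} with hSdef
  set τ : ℝ := sInf S with hτdef
  have hbdd : BddBelow S := ⟨0, fun t ht => le_of_lt ht.1⟩
  have hτ0 : 0 ≤ τ := le_csInf hS fun t ht => le_of_lt ht.1
  -- any nonnegative point where g < 0 is ≥ τ
  have hlow : ∀ t : ℝ, 0 ≤ t → g t < 0 → τ ≤ t := by
    intro t ht hgt
    have htpos : 0 < t := by
      rcases ht.lt_or_eq with h | h
      · exact h
      · exact absurd hgt (by rw [← h]; linarith)
    exact csInf_le hbdd ⟨htpos, hgt⟩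
  -- open set where g < 0
  have hopen : IsOpen {t : ℝ | g t < 0} := isOpen_lt hg continuous_const
  -- g τ = 0
  have hgτ : g τ = 0 := by
    have hle : g τ ≤ 0 := by
      have hcl : τ ∈ closure S := csInf_mem_closure hS hbdd
      have hsub : closure S ⊆ {t : ℝ | g t ≤ 0} :=
        closure_minimal (fun t ht => le_of_lt ht.2) (isClosed_le hg continuous_const)
      exact hsub hcl
    rcases hle.lt_or_eq with hlt | heq
    · exfalso
      have hτpos : 0 < τ := by
        rcases hτ0.lt_or_eq with h | h
        · exact h
        · exact absurd hlt (by rw [← h]; linarith)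
      rcases Metric.isOpen_iff.1 hopen τ hlt with ⟨δ, hδ, hball⟩
      set t := τ - min (δ / 2) (τ / 2) with htdef
      have h1 : 0 < min (δ / 2) (τ / 2) := lt_min (by linarith) (by linarith)
      have h2 : min (δ / 2) (τ / 2) ≤ τ / 2 := min_le_right _ _
      have htpos : 0 < t := by simp only [htdef]; linarith
      have htlt : t < τ := by simp only [htdef]; linarith
      have hmem : t ∈ Metric.ball τ δ := by
        simp only [Metric.mem_ball, Real.dist_eq, htdef]
        rw [abs_of_nonpos (by linarith [min_le_left (δ / 2) (τ / 2)])]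
        have := min_le_left (δ / 2) (τ / 2)
        linarith
      have : τ ≤ t := hlow t htpos.le (hball hmem)
      linarith
    · exact heq
  -- for any b > τ, eventually there is a grid point < b with g < 0
  have hgrid : ∀ b : ℝ, τ < b → ∃ N : ℕ, ∀ n : ℕ, N ≤ n →
      ∃ k : ℕ, g ((k : ℝ) / n) < 0 ∧ (k : ℝ) / n < b := by
    intro b hb
    obtain ⟨s, hsS, hsb⟩ := exists_lt_of_csInf_lt hS hb
    obtain ⟨hspos, hgs⟩ := hsS
    rcases Metric.isOpen_iff.1 hopen s hgs with ⟨δ, hδ, hball⟩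
    set δ' := min δ (b - s) with hδ'def
    have hδ'pos : 0 < δ' := lt_min hδ (by linarith)
    refine ⟨⌈1 / δ'⌉₊ + 1, fun n hn => ?_⟩
    have hnpos : 0 < n := lt_of_lt_of_le (Nat.succ_pos _) hn
    have hnR : (0 : ℝ) < n := Nat.cast_pos.2 hnpos
    have hninv : 1 / (n : ℝ) < δ' := by
      rw [div_lt_iff₀ hnR]
      have h1 : 1 / δ' < (n : ℝ) := by
        calc 1 / δ' ≤ (⌈1 / δ'⌉₊ : ℝ) := Nat.le_ceil _
        _ < ((⌈1 / δ'⌉₊ + 1 : ℕ) : ℝ) := by push_cast; linarith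
        _ ≤ (n : ℝ) := Nat.cast_le.2 hn
      calc 1 = δ' * (1 / δ') := by field_simp
      _ < δ' * n := by exact mul_lt_mul_of_pos_left h1 hδ'pos
    set k := ⌈(n : ℝ) * s⌉₊ with hkdef
    have hk1 : (n : ℝ) * s ≤ (k : ℝ) := Nat.le_ceil _
    have hk2 : (k : ℝ) < (n : ℝ) * s + 1 :=
      Nat.ceil_lt_add_one (by positivity)
    have hlo : s ≤ (k : ℝ) / n := by rw [le_div_iff₀ hnR]; linarith
    have hhi : (k : ℝ) / n < s + δ' := by
      rw [div_lt_iff₀ hnR]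
      have : δ' * n > 1 := by
        calc (1 : ℝ) = (1 / n) * n := by field_simp
        _ < δ' * n := by exact mul_lt_mul_of_pos_right hninv hnR
      nlinarith
    have hmem : (k : ℝ) / n ∈ Metric.ball s δ := by
      simp only [Metric.mem_ball, Real.dist_eq]
      rw [abs_of_nonneg (by linarith)]
      have := min_le_left δ (b - s)
      simp only [hδ'def] at hhi
      linarith [min_le_left δ (b - s)]
    refine ⟨k, hball hmem, ?_⟩
    have := min_le_right δ (b - s)
    linarith
  -- (i)
  have hNE : ∀ᶠ n : ℕ in atTop, {k : ℕ | g ((k : ℝ) / n) < 0}.Nonempty := by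
    obtain ⟨N, hN⟩ := hgrid (τ + 1) (by linarith)
    filter_upwards [eventually_ge_atTop N] with n hn
    obtain ⟨k, hk, -⟩ := hN n hn
    exact ⟨k, hk⟩
  -- (ii)
  have hT : Tendsto (fun n : ℕ => ((sInf {k : ℕ | g ((k : ℝ) / n) < 0} : ℕ) : ℝ) / n)
      atTop (nhds τ) := by
    rw [tendsto_order]
    constructor
    · intro b hb
      filter_upwards [hNE, eventually_ge_atTop 1] with n hn hn1
      have hmem := Nat.sInf_mem hn
      have : τ ≤ ((sInf {k : ℕ | g ((k : ℝ) / n) < 0} : ℕ) : ℝ) / n :=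
        hlow _ (by positivity) hmem
      linarith
    · intro b hb
      obtain ⟨N, hN⟩ := hgrid b hb
      filter_upwards [eventually_ge_atTop N, eventually_ge_atTop 1] with n hn hn1
      obtain ⟨k, hk, hkb⟩ := hN n hn
      have hne : {k : ℕ | g ((k : ℝ) / n) < 0}.Nonempty := ⟨k, hk⟩
      have hle : sInf {k : ℕ | g ((k : ℝ) / n) < 0} ≤ k := Nat.sInf_le hk
      have hnR : (0 : ℝ) < n := by exact_mod_cast hn1
      calc ((sInf {k : ℕ | g ((k : ℝ) / n) < 0} : ℕ) : ℝ) / n ≤ (k : ℝ) / n := by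
            gcongr
            all_goals exact_mod_cast hle
      _ < b := hkb
  refine ⟨hNE, hT, ?_⟩
  have : Tendsto (fun n : ℕ => g (((sInf {k : ℕ | g ((k : ℝ) / n) < 0} : ℕ) : ℝ) / n))
      atTop (nhds (g τ)) := (hg.tendsto τ).comp hT
  rwa [hgτ] at this
end
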